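/- Fix κ with 0 < κ < π/2, and let h : ℝ → ℝ be the Vow radial profile: h(ω) = √(1/2 + tan(κ(1 + 2·log₂(2ω/π)))/(2·tan κ)) for π/4 ≤ ω < π/2, h(ω) = √(1/2 − tan(κ(1 + 2·log₂(ω/π)))/(2·tan κ)) for π/2 ≤ ω ≤ π, and h(ω) = 0 otherwise. Then (i) for every ω in [π/4, π] the expression under the corresponding square root lies in [0,1], so 0 ≤ h(ω) ≤ 1 everywhere, and (ii) h is continuous on the open interval (0, ∞); in particular the two defining pieces agree in the limit at ω = π/2 with common value 1, and h tends to 0 at ω = π/4 and equals 0 at ω = π. -/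

import Mathlib

open Real Filter Topology

private lemma vow_cont_aux {κ x : ℝ} (hκ₀ : 0 < κ) (hκ₁ : κ < π / 2) {c : ℝ}
    (hcx : c * x / π ≠ 0)
    (h1 : -κ ≤ κ * (1 + 2 * Real.logb 2 (c * x / π)))
    (h2 : κ * (1 + 2 * Real.logb 2 (c * x / π)) ≤ κ) :
    ContinuousAt (fun ω => Real.tan (κ * (1 + 2 * Real.logb 2 (c * ω / π)))) x := by
  have hin : ContinuousAt (fun ω : ℝ => c * ω / π) x :=
    (continuousAt_const.mul continuousAt_id).div_const π
  have hl : ContinuousAt (fun ω : ℝ => Real.logb 2 (c * ω / π)) x :=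
    (Real.continuousAt_logb hcx).comp (f := fun ω : ℝ => c * ω / π) hin
  have hA : ContinuousAt (fun ω : ℝ => κ * (1 + 2 * Real.logb 2 (c * ω / π))) x :=
    continuousAt_const.mul (continuousAt_const.add (continuousAt_const.mul hl))
  have hcos : Real.cos (κ * (1 + 2 * Real.logb 2 (c * x / π))) ≠ 0 :=
    (Real.cos_pos_of_mem_Ioo ⟨by linarith, by linarith⟩).ne'
  exact (Real.continuousAt_tan.2 hcos).comp
    (f := fun ω : ℝ => κ * (1 + 2 * Real.logb 2 (c * ω / π))) hA

/-- Well-definedness, bounds, and continuity of the Vow (variance-optimal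
wavelet) radial profile. -/
theorem vow_profile_bounds_and_continuity
    (κ : ℝ) (hκ₀ : 0 < κ) (hκ₁ : κ < π / 2)
    (h : ℝ → ℝ)
    (hdef : ∀ ω : ℝ,
      h ω =
        if π / 4 ≤ ω ∧ ω < π / 2 then
          Real.sqrt (1 / 2 + Real.tan (κ * (1 + 2 * Real.logb 2 (2 * ω / π))) / (2 * Real.tan κ))
        else if π / 2 ≤ ω ∧ ω ≤ π then
          Real.sqrt (1 / 2 - Real.tan (κ * (1 + 2 * Real.logb 2 (ω / π))) / (2 * Real.tan κ))
        else 0) :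
    -- (i) the expressions under the square roots lie in [0,1] on their ranges,
    (∀ ω : ℝ, π / 4 ≤ ω → ω < π / 2 →
      (1 / 2 + Real.tan (κ * (1 + 2 * Real.logb 2 (2 * ω / π))) / (2 * Real.tan κ))
        ∈ Set.Icc (0 : ℝ) 1) ∧
    (∀ ω : ℝ, π / 2 ≤ ω → ω ≤ π →
      (1 / 2 - Real.tan (κ * (1 + 2 * Real.logb 2 (ω / π))) / (2 * Real.tan κ))
        ∈ Set.Icc (0 : ℝ) 1) ∧
    -- so 0 ≤ h(ω) ≤ 1 everywhere,
    (∀ ω : ℝ, h ω ∈ Set.Icc (0 : ℝ) 1) ∧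
    -- (ii) h is continuous on (0, ∞),
    ContinuousOn h (Set.Ioi (0 : ℝ)) ∧
    -- in particular the two pieces agree in the limit at π/2 with common value 1,
    Tendsto h (𝓝[<] (π / 2)) (𝓝 1) ∧ h (π / 2) = 1 ∧
    -- h tends to 0 at π/4 and equals 0 at π.
    Tendsto h (𝓝 (π / 4)) (𝓝 0) ∧ h π = 0 := by
  have hπ : (0:ℝ) < π := pi_pos
  have hπ0 : (π:ℝ) ≠ 0 := hπ.ne'
  have hT : 0 < Real.tan κ := Real.tan_pos_of_pos_of_lt_pi_div_two hκ₀ hκ₁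
  -- quotient bounds
  have qb : ∀ a : ℝ, -κ ≤ a → a ≤ κ →
      -(1/2 : ℝ) ≤ Real.tan a / (2 * Real.tan κ) ∧ Real.tan a / (2 * Real.tan κ) ≤ 1/2 := by
    intro a h1 h2
    have hmem : a ∈ Set.Ioo (-(π/2)) (π/2) := ⟨by linarith, by linarith⟩
    have hle : Real.tan a ≤ Real.tan κ :=
      Real.strictMonoOn_tan.monotoneOn hmem ⟨by linarith, hκ₁⟩ h2
    have hge : -Real.tan κ ≤ Real.tan a := by
      have := Real.strictMonoOn_tan.monotoneOn ⟨by linarith, by linarith⟩ hmem h1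
      rwa [Real.tan_neg] at this
    constructor
    · rw [le_div_iff₀ (by positivity)]; linarith
    · rw [div_le_iff₀ (by positivity)]; linarith
  -- logb bounds
  have lb : ∀ y : ℝ, 1/2 ≤ y → y ≤ 1 → -1 ≤ Real.logb 2 y ∧ Real.logb 2 y ≤ 0 := by
    intro y hy1 hy2
    have hy0 : (0:ℝ) < y := by linarith
    constructor
    · rw [Real.le_logb_iff_rpow_le one_lt_two hy0]
      rw [Real.rpow_neg_one]
      norm_num
      linarith
    · exact Real.logb_nonpos one_lt_two hy0.le hy2
  -- argument bounds
  have ab1 : ∀ ω : ℝ, π/4 ≤ ω → ω ≤ π/2 →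
      -κ ≤ κ * (1 + 2 * Real.logb 2 (2*ω/π)) ∧ κ * (1 + 2 * Real.logb 2 (2*ω/π)) ≤ κ := by
    intro ω h1 h2
    have hy1 : (1/2:ℝ) ≤ 2*ω/π := by rw [le_div_iff₀ hπ]; linarith
    have hy2 : 2*ω/π ≤ 1 := by rw [div_le_one hπ]; linarith
    obtain ⟨hL1, hL2⟩ := lb _ hy1 hy2
    constructor <;> nlinarith
  have ab2 : ∀ ω : ℝ, π/2 ≤ ω → ω ≤ π →
      -κ ≤ κ * (1 + 2 * Real.logb 2 (ω/π)) ∧ κ * (1 + 2 * Real.logb 2 (ω/π)) ≤ κ := by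
    intro ω h1 h2
    have hy1 : (1/2:ℝ) ≤ ω/π := by rw [le_div_iff₀ hπ]; linarith
    have hy2 : ω/π ≤ 1 := by rw [div_le_one hπ]; linarith
    obtain ⟨hL1, hL2⟩ := lb _ hy1 hy2
    constructor <;> nlinarith
  -- parts (i)
  have part1 : ∀ ω : ℝ, π / 4 ≤ ω → ω < π / 2 →
      (1 / 2 + Real.tan (κ * (1 + 2 * Real.logb 2 (2 * ω / π))) / (2 * Real.tan κ))
        ∈ Set.Icc (0 : ℝ) 1 := by
    intro ω h1 h2
    obtain ⟨b1, b2⟩ := ab1 ω h1 h2.le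
    obtain ⟨q1, q2⟩ := qb _ b1 b2
    exact Set.mem_Icc.2 ⟨by linarith, by linarith⟩
  have part2 : ∀ ω : ℝ, π / 2 ≤ ω → ω ≤ π →
      (1 / 2 - Real.tan (κ * (1 + 2 * Real.logb 2 (ω / π))) / (2 * Real.tan κ))
        ∈ Set.Icc (0 : ℝ) 1 := by
    intro ω h1 h2
    obtain ⟨b1, b2⟩ := ab2 ω h1 h2
    obtain ⟨q1, q2⟩ := qb _ b1 b2
    exact Set.mem_Icc.2 ⟨by linarith, by linarith⟩
  -- part h ∈ [0,1]
  have part3 : ∀ ω : ℝ, h ω ∈ Set.Icc (0 : ℝ) 1 := by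
    intro ω
    rw [hdef ω]
    split_ifs with hc1 hc2
    · exact Set.mem_Icc.2 ⟨Real.sqrt_nonneg _,
        Real.sqrt_le_one.2 (Set.mem_Icc.1 (part1 ω hc1.1 hc1.2)).2⟩
    · exact Set.mem_Icc.2 ⟨Real.sqrt_nonneg _,
        Real.sqrt_le_one.2 (Set.mem_Icc.1 (part2 ω hc2.1 hc2.2)).2⟩
    · exact Set.mem_Icc.2 ⟨le_refl 0, zero_le_one⟩
  -- special values of arguments
  have lhalf : Real.logb 2 (1/2 : ℝ) = -1 := by
    rw [show (1/2:ℝ) = 2⁻¹ by norm_num, Real.logb_inv, Real.logb_self_eq_one one_lt_two]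
  have A14 : κ * (1 + 2 * Real.logb 2 (2 * (π/4) / π)) = -κ := by
    rw [show 2 * (π/4) / π = 1/2 by field_simp; ring, lhalf]; ring
  have A12 : κ * (1 + 2 * Real.logb 2 (2 * (π/2) / π)) = κ := by
    rw [show 2 * (π/2) / π = 1 by field_simp, Real.logb_one]; ring
  have B12 : κ * (1 + 2 * Real.logb 2 ((π/2) / π)) = -κ := by
    rw [show (π/2) / π = 1/2 by field_simp, lhalf]; ring
  have Bpi : κ * (1 + 2 * Real.logb 2 (π / π)) = κ := by
    rw [div_self hπ0, Real.logb_one]; ring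
  -- special sqrt values
  have key1a : Real.sqrt (1/2 + Real.tan (-κ) / (2 * Real.tan κ)) = 0 := by
    rw [show (1/2:ℝ) + Real.tan (-κ) / (2 * Real.tan κ) = 0 by
      rw [Real.tan_neg]; field_simp; ring]
    exact Real.sqrt_zero
  have key1b : Real.sqrt (1/2 + Real.tan κ / (2 * Real.tan κ)) = 1 := by
    rw [show (1/2:ℝ) + Real.tan κ / (2 * Real.tan κ) = 1 by field_simp; ring]
    exact Real.sqrt_one
  have key2a : Real.sqrt (1/2 - Real.tan (-κ) / (2 * Real.tan κ)) = 1 := by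
    rw [show (1/2:ℝ) - Real.tan (-κ) / (2 * Real.tan κ) = 1 by
      rw [Real.tan_neg]; field_simp; ring]
    exact Real.sqrt_one
  have key2b : Real.sqrt (1/2 - Real.tan κ / (2 * Real.tan κ)) = 0 := by
    rw [show (1/2:ℝ) - Real.tan κ / (2 * Real.tan κ) = 0 by field_simp; ring]
    exact Real.sqrt_zero
  -- piecewise descriptions of h
  have e0l : ∀ ω : ℝ, ω < π/4 → h ω = 0 := by
    intro ω hω
    rw [hdef ω, if_neg (fun hc => by linarith [hc.1]), if_neg (fun hc => by linarith [hc.1])]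
  have e1 : ∀ ω : ℝ, π/4 ≤ ω → ω < π/2 → h ω =
      Real.sqrt (1/2 + Real.tan (κ * (1 + 2 * Real.logb 2 (2*ω/π))) / (2 * Real.tan κ)) :=
    fun ω h1 h2 => by rw [hdef ω, if_pos ⟨h1, h2⟩]
  have e2 : ∀ ω : ℝ, π/2 ≤ ω → ω ≤ π → h ω =
      Real.sqrt (1/2 - Real.tan (κ * (1 + 2 * Real.logb 2 (ω/π))) / (2 * Real.tan κ)) :=
    fun ω h1 h2 => by
      rw [hdef ω, if_neg (fun hc => by linarith [hc.2]), if_pos ⟨h1, h2⟩]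
  have e0r : ∀ ω : ℝ, π < ω → h ω = 0 := by
    intro ω hω
    rw [hdef ω, if_neg (fun hc => by linarith [hc.2]), if_neg (fun hc => by linarith [hc.2])]
  -- continuity of the pieces
  have c1 : ∀ x : ℝ, π/4 ≤ x → x ≤ π/2 → ContinuousAt
      (fun ω => Real.sqrt (1/2 + Real.tan (κ * (1 + 2 * Real.logb 2 (2*ω/π)))
        / (2 * Real.tan κ))) x := by
    intro x h1 h2
    have hx : 0 < x := by linarith
    obtain ⟨b1, b2⟩ := ab1 x h1 h2
    have ht := vow_cont_aux (x := x) hκ₀ hκ₁ (c := 2) (by positivity) b1 b2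
    exact (continuousAt_const.add (ht.div_const _)).sqrt
  have c2 : ∀ x : ℝ, π/2 ≤ x → x ≤ π → ContinuousAt
      (fun ω => Real.sqrt (1/2 - Real.tan (κ * (1 + 2 * Real.logb 2 (ω/π)))
        / (2 * Real.tan κ))) x := by
    intro x h1 h2
    have hx : 0 < x := by linarith
    obtain ⟨b1, b2⟩ := ab2 x h1 h2
    have ht := vow_cont_aux (x := x) hκ₀ hκ₁ (c := 1)
      (by rw [one_mul]; positivity) (by rwa [one_mul]) (by rwa [one_mul])
    simp only [one_mul] at ht
    exact (continuousAt_const.sub (ht.div_const _)).sqrt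
  -- special values of h
  have hq2 : π/4 < π/2 := by linarith
  have hq3 : π/2 < π := by linarith
  have hhalf : h (π/2) = 1 := by rw [e2 _ le_rfl hq3.le, B12, key2a]
  have hpi : h π = 0 := by rw [e2 π hq3.le le_rfl, Bpi, key2b]
  have h14 : h (π/4) = 0 := by rw [e1 _ le_rfl hq2, A14, key1a]
  -- limit at π/4
  have tend4 : Tendsto h (𝓝 (π / 4)) (𝓝 0) := by
    rw [← nhdsLT_sup_nhdsGE (π/4), tendsto_sup]
    constructor
    · refine Tendsto.congr' ?_ tendsto_const_nhds
      filter_upwards [self_mem_nhdsWithin] with ω hω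
      exact (e0l ω hω).symm
    · have hc : Tendsto (fun ω => Real.sqrt (1/2 + Real.tan
          (κ * (1 + 2 * Real.logb 2 (2*ω/π))) / (2 * Real.tan κ))) (𝓝 (π/4)) (𝓝 0) := by
        have hc := c1 (π/4) le_rfl hq2.le
        simpa only [ContinuousAt, A14, key1a] using hc
      refine Tendsto.congr' ?_ (hc.mono_left nhdsWithin_le_nhds)
      filter_upwards [Ico_mem_nhdsGE hq2] with ω hω
      exact (e1 ω hω.1 hω.2).symm
  -- left limit at π/2
  have tendL : Tendsto h (𝓝[<] (π / 2)) (𝓝 1) := by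
    have hc : Tendsto (fun ω => Real.sqrt (1/2 + Real.tan
        (κ * (1 + 2 * Real.logb 2 (2*ω/π))) / (2 * Real.tan κ))) (𝓝 (π/2)) (𝓝 1) := by
      have hc := c1 (π/2) hq2.le le_rfl
      simpa only [ContinuousAt, A12, key1b] using hc
    refine Tendsto.congr' ?_ (hc.mono_left nhdsWithin_le_nhds)
    filter_upwards [Ioo_mem_nhdsLT hq2] with ω hω
    exact (e1 ω hω.1.le hω.2).symm
  -- right limit at π/2
  have tendR : Tendsto h (𝓝[≥] (π / 2)) (𝓝 1) := by
    have hc : Tendsto (fun ω => Real.sqrt (1/2 - Real.tan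
        (κ * (1 + 2 * Real.logb 2 (ω/π))) / (2 * Real.tan κ))) (𝓝 (π/2)) (𝓝 1) := by
      have hc := c2 (π/2) le_rfl hq3.le
      simpa only [ContinuousAt, B12, key2a] using hc
    refine Tendsto.congr' ?_ (hc.mono_left nhdsWithin_le_nhds)
    filter_upwards [Ico_mem_nhdsGE hq3] with ω hω
    exact (e2 ω hω.1 hω.2.le).symm
  have contHalf : ContinuousAt h (π/2) := by
    rw [ContinuousAt, hhalf, ← nhdsLT_sup_nhdsGE (π/2), tendsto_sup]
    exact ⟨tendL, tendR⟩
  -- limits at π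
  have tendPiL : Tendsto h (𝓝[≤] π) (𝓝 0) := by
    have hc : Tendsto (fun ω => Real.sqrt (1/2 - Real.tan
        (κ * (1 + 2 * Real.logb 2 (ω/π))) / (2 * Real.tan κ))) (𝓝 π) (𝓝 0) := by
      have hc := c2 π hq3.le le_rfl
      simpa only [ContinuousAt, Bpi, key2b] using hc
    refine Tendsto.congr' ?_ (hc.mono_left nhdsWithin_le_nhds)
    filter_upwards [Ioc_mem_nhdsLE hq3] with ω hω
    exact (e2 ω hω.1.le hω.2).symm
  have tendPiR : Tendsto h (𝓝[>] π) (𝓝 0) := by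
    refine Tendsto.congr' ?_ tendsto_const_nhds
    filter_upwards [self_mem_nhdsWithin] with ω hω
    exact (e0r ω hω).symm
  have contPi : ContinuousAt h π := by
    rw [ContinuousAt, hpi, ← nhdsLE_sup_nhdsGT π, tendsto_sup]
    exact ⟨tendPiL, tendPiR⟩
  have cont14 : ContinuousAt h (π/4) := by
    rw [ContinuousAt, h14]; exact tend4
  -- continuity on (0, ∞)
  have contOn : ContinuousOn h (Set.Ioi (0 : ℝ)) := by
    intro x hx
    rcases lt_trichotomy x (π/4) with hc | rfl | hc
    · refine ContinuousAt.continuousWithinAt (Filter.EventuallyEq.continuousAt (y := (0:ℝ)) ?_)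
      filter_upwards [Iio_mem_nhds hc] with ω hω
      exact e0l ω hω
    · exact cont14.continuousWithinAt
    · rcases lt_trichotomy x (π/2) with hc2 | rfl | hc2
      · refine ContinuousAt.continuousWithinAt (ContinuousAt.congr (c1 x hc.le hc2.le) ?_)
        filter_upwards [Ioo_mem_nhds hc hc2] with ω hω
        exact (e1 ω hω.1.le hω.2).symm
      · exact contHalf.continuousWithinAt
      · rcases lt_trichotomy x π with hc3 | rfl | hc3
        · refine ContinuousAt.continuousWithinAt (ContinuousAt.congr (c2 x hc2.le hc3.le) ?_)
          filter_upwards [Ioo_mem_nhds hc2 hc3] with ω hω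
          exact (e2 ω hω.1.le hω.2.le).symm
        · exact contPi.continuousWithinAt
        · refine ContinuousAt.continuousWithinAt (Filter.EventuallyEq.continuousAt (y := (0:ℝ)) ?_)
          filter_upwards [Ioi_mem_nhds hc3] with ω hω
          exact e0r ω hω
  exact ⟨part1, part2, part3, contOn, tendL, hhalf, tend4, hpi⟩
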